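/- Let H and Ĥ be symmetric positive definite d×d matrices with λ_min(Ĥ) ≥ M > 0. Then the spectral norm of H^{1/2}(H^{−1} − Ĥ^{−1})H^{1/2} is at most ‖H − Ĥ‖_F / M. -/

import Mathlib

open Matrix

/-- Frobenius norm of a real matrix. -/
noncomputable def frobM {d : ℕ} (A : Matrix (Fin d) (Fin d) ℝ) : ℝ :=
  Real.sqrt (∑ i, ∑ j, (A i j) ^ 2)

lemma frobM_nonneg {d : ℕ} (A : Matrix (Fin d) (Fin d) ℝ) : 0 ≤ frobM A :=
  Real.sqrt_nonneg _

/-- Cauchy–Schwarz for the real dot product. -/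
lemma cs_dot {d : ℕ} (a b : Fin d → ℝ) : (a ⬝ᵥ b)^2 ≤ (a ⬝ᵥ a) * (b ⬝ᵥ b) := by
  simpa [dotProduct, pow_two] using
    Finset.sum_mul_sq_le_sq_mul_sq Finset.univ a b

/-- For a symmetric matrix, move it across the dot product. -/
lemma symm_dot {d : ℕ} {A : Matrix (Fin d) (Fin d) ℝ} (hA : Aᵀ = A)
    (v x : Fin d → ℝ) : v ⬝ᵥ A.mulVec x = (A.mulVec v) ⬝ᵥ x := by
  rw [dotProduct_mulVec, ← mulVec_transpose, hA]

/-- Cauchy–Schwarz for a positive semidefinite quadratic form. -/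
lemma cs_psd {d : ℕ} {B : Matrix (Fin d) (Fin d) ℝ} (hB : B.PosSemidef) (a b : Fin d → ℝ) :
    (a ⬝ᵥ B.mulVec b)^2 ≤ (a ⬝ᵥ B.mulVec a) * (b ⬝ᵥ B.mulVec b) := by
  obtain ⟨S, hSherm, hSS⟩ : ∃ S : Matrix (Fin d) (Fin d) ℝ, S.IsHermitian ∧ S * S = B :=
    by open scoped MatrixOrder in
      exact ⟨CFC.sqrt B, (CFC.sqrt_nonneg B).posSemidef.1, CFC.sqrt_mul_sqrt_self B hB.nonneg⟩
  have hSt : Sᵀ = S := hSherm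
  have key : ∀ x y : Fin d → ℝ, x ⬝ᵥ B.mulVec y = (S.mulVec x) ⬝ᵥ (S.mulVec y) := by
    intro x y
    rw [← hSS, ← mulVec_mulVec, dotProduct_mulVec, ← mulVec_transpose, hSt]
  rw [key, key, key]
  exact cs_dot _ _

/-- A quadratic form is bounded by the Frobenius norm of the matrix. -/
lemma frob_quad {d : ℕ} (A : Matrix (Fin d) (Fin d) ℝ) (w : Fin d → ℝ) :
    |w ⬝ᵥ A.mulVec w| ≤ frobM A * (w ⬝ᵥ w) := by
  have h1 : w ⬝ᵥ A.mulVec w = ∑ p : Fin d × Fin d, A p.1 p.2 * (w p.1 * w p.2) := by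
    rw [Fintype.sum_prod_type]
    simp [dotProduct, mulVec, Finset.mul_sum]
    congr 1; ext i; congr 1; ext j; ring
  have h2 := Finset.sum_mul_sq_le_sq_mul_sq Finset.univ
      (fun p : Fin d × Fin d => A p.1 p.2) (fun p : Fin d × Fin d => w p.1 * w p.2)
  have h3 : ∑ p : Fin d × Fin d, (w p.1 * w p.2)^2 = (w ⬝ᵥ w)^2 := by
    rw [Fintype.sum_prod_type]
    simp [dotProduct, pow_two, Finset.sum_mul, Finset.mul_sum]
    congr 1; ext i; congr 1; ext j; ring
  have h4 : ∑ p : Fin d × Fin d, (A p.1 p.2)^2 = (frobM A)^2 := by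
    rw [Fintype.sum_prod_type, frobM, Real.sq_sqrt
      (Finset.sum_nonneg fun i _ => Finset.sum_nonneg fun j _ => sq_nonneg (A i j))]
  rw [h1]
  have hw : (0:ℝ) ≤ w ⬝ᵥ w := Finset.sum_nonneg fun i _ => mul_self_nonneg (w i)
  have hfa : 0 ≤ frobM A := frobM_nonneg A
  have h5 : (∑ p : Fin d × Fin d, A p.1 p.2 * (w p.1 * w p.2))^2 ≤ (frobM A * (w ⬝ᵥ w))^2 := by
    calc _ ≤ (∑ p : Fin d × Fin d, (A p.1 p.2)^2) * ∑ p : Fin d × Fin d, (w p.1 * w p.2)^2 := h2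
    _ = (frobM A * (w ⬝ᵥ w))^2 := by rw [h3, h4]; ring
  set x := ∑ p : Fin d × Fin d, A p.1 p.2 * (w p.1 * w p.2) with hx
  nlinarith [sq_abs x, abs_nonneg x, mul_nonneg hfa hw]

/-- Let `H, Ĥ` be symmetric positive definite with all eigenvalues of `Ĥ` at least `M > 0`,
and let `T = H^{1/2}` be the positive definite square root of `H`.  Then the spectral norm
of `T (H⁻¹ − Ĥ⁻¹) T = H^{1/2}(H^{−1} − Ĥ^{−1})H^{1/2}` is at most `‖H − Ĥ‖_F / M`;
since this matrix is symmetric, the spectral norm bound is expressed via the quadratic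
form: `|vᵀ (T (H⁻¹ − Ĥ⁻¹) T) v| ≤ (‖H − Ĥ‖_F / M) (vᵀv)` for all `v`. -/
theorem stmt_12 {d : ℕ} (M : ℝ) (hM : 0 < M)
    (H Hhat T : Matrix (Fin d) (Fin d) ℝ)
    (hH : H.PosDef) (hHhat : Hhat.PosDef) (hT : T.PosDef)
    (hEig : ∀ v : Fin d → ℝ, M * (v ⬝ᵥ v) ≤ v ⬝ᵥ Hhat.mulVec v)
    (hTsq : T * T = H) :
    ∀ v : Fin d → ℝ,
      |v ⬝ᵥ (T * (H⁻¹ - Hhat⁻¹) * T).mulVec v| ≤ (frobM (H - Hhat) / M) * (v ⬝ᵥ v) := by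
  intro v
  set c := frobM (H - Hhat) / M with hc
  have hF : 0 ≤ frobM (H - Hhat) := frobM_nonneg _
  have hc0 : 0 ≤ c := div_nonneg hF hM.le
  have dot_nn : ∀ w : Fin d → ℝ, (0:ℝ) ≤ w ⬝ᵥ w :=
    fun w => Finset.sum_nonneg fun i _ => mul_self_nonneg (w i)
  -- key comparison |wᵀ(H-Ĥ)w| ≤ c wᵀĤw
  have key : ∀ w : Fin d → ℝ, |w ⬝ᵥ (H - Hhat).mulVec w| ≤ c * (w ⬝ᵥ Hhat.mulVec w) := by
    intro w
    calc |w ⬝ᵥ (H - Hhat).mulVec w| ≤ frobM (H - Hhat) * (w ⬝ᵥ w) := frob_quad _ w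
    _ = c * (M * (w ⬝ᵥ w)) := by rw [hc]; field_simp
    _ ≤ c * (w ⬝ᵥ Hhat.mulVec w) := mul_le_mul_of_nonneg_left (hEig w) hc0
  have keysplit : ∀ w : Fin d → ℝ,
      w ⬝ᵥ (H - Hhat).mulVec w = w ⬝ᵥ H.mulVec w - w ⬝ᵥ Hhat.mulVec w := by
    intro w; rw [sub_mulVec, dotProduct_sub]
  have keyU : ∀ w : Fin d → ℝ, w ⬝ᵥ H.mulVec w ≤ (1 + c) * (w ⬝ᵥ Hhat.mulVec w) := by
    intro w
    have h := (abs_le.mp (key w)).2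
    rw [keysplit w] at h; linarith
  have keyL : ∀ w : Fin d → ℝ, (1 - c) * (w ⬝ᵥ Hhat.mulVec w) ≤ w ⬝ᵥ H.mulVec w := by
    intro w
    have h := (abs_le.mp (key w)).1
    rw [keysplit w] at h; linarith
  -- basic matrix facts
  have hTt : Tᵀ = T := by have := hT.1; simpa [Matrix.IsSymm] using this
  have hHhatt : Hhatᵀ = Hhat := by have := hHhat.1; simpa [Matrix.IsSymm] using this
  have hHhatit : (Hhat⁻¹)ᵀ = Hhat⁻¹ := by rw [transpose_nonsing_inv, hHhatt]
  have hTdet : IsUnit T.det := isUnit_iff_ne_zero.mpr hT.det_pos.ne'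
  have hHhdet : IsUnit Hhat.det := isUnit_iff_ne_zero.mpr hHhat.det_pos.ne'
  have hTTi : T * T⁻¹ = 1 := Matrix.mul_nonsing_inv T hTdet
  have hTiT : T⁻¹ * T = 1 := Matrix.nonsing_inv_mul T hTdet
  have hmat : T * (H⁻¹ - Hhat⁻¹) * T = 1 - T * Hhat⁻¹ * T := by
    have hHinv : H⁻¹ = T⁻¹ * T⁻¹ := by rw [← hTsq, Matrix.mul_inv_rev]
    rw [mul_sub, sub_mul, hHinv]
    congr 1
    calc T * (T⁻¹ * T⁻¹) * T = T * T⁻¹ * (T⁻¹ * T) := by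
          rw [← mul_assoc, ← mul_assoc, mul_assoc (T * T⁻¹)]
    _ = 1 := by rw [hTTi, hTiT, one_mul]
  -- the quantity q
  set u : Fin d → ℝ := Hhat⁻¹.mulVec (T.mulVec v) with hu_def
  set q : ℝ := v ⬝ᵥ (T * Hhat⁻¹ * T).mulVec v with hq_def
  have hu : Hhat.mulVec u = T.mulVec v := by
    rw [hu_def, mulVec_mulVec, Matrix.mul_nonsing_inv Hhat hHhdet, one_mulVec]
  have hq1 : q = (T.mulVec v) ⬝ᵥ Hhat⁻¹.mulVec (T.mulVec v) := by
    rw [hq_def, ← mulVec_mulVec, ← mulVec_mulVec, symm_dot hTt]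
  have hq2 : q = u ⬝ᵥ Hhat.mulVec u := by
    rw [hq1, ← hu_def, ← hu, symm_dot hHhatt, dotProduct_comm]
  have hq3 : q = (T.mulVec u) ⬝ᵥ v := by
    rw [hq1, ← hu_def, dotProduct_comm, symm_dot hTt]
  have hq0 : 0 ≤ q := by
    have := hEig u
    have := dot_nn u
    rw [hq2]; nlinarith
  -- upper bound : q ≤ (1+c) (v⬝v)
  have hs : u ⬝ᵥ H.mulVec u = (T.mulVec u) ⬝ᵥ (T.mulVec u) := by
    rw [← hTsq, ← mulVec_mulVec, symm_dot hTt]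
  have hupper : q ≤ (1 + c) * (v ⬝ᵥ v) := by
    have hcs : q^2 ≤ (u ⬝ᵥ H.mulVec u) * (v ⬝ᵥ v) := by
      rw [hq3, hs]; exact cs_dot _ _
    have hU := keyU u
    rw [← hq2] at hU
    have hvv := dot_nn v
    rcases eq_or_lt_of_le hq0 with h0 | h0
    · nlinarith
    · have h2 : q * q ≤ ((1 + c) * (v ⬝ᵥ v)) * q := by
        nlinarith [mul_le_mul_of_nonneg_right hU hvv]
      exact le_of_mul_le_mul_right h2 h0
  -- lower bound : (1-c) (v⬝v) ≤ q
  have hlower : (1 - c) * (v ⬝ᵥ v) ≤ q := by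
    rcases le_or_gt 1 c with hc1 | hc1
    · nlinarith [dot_nn v]
    · set x : Fin d → ℝ := T⁻¹.mulVec v with hx_def
      have hTx : T.mulVec x = v := by
        rw [hx_def, mulVec_mulVec, hTTi, one_mulVec]
      have hvv_eq : v ⬝ᵥ v = x ⬝ᵥ T.mulVec v := by
        rw [symm_dot hTt, hTx]
      set a : Fin d → ℝ := Hhat.mulVec x with ha_def
      have hia : Hhat⁻¹.mulVec a = x := by
        rw [ha_def, mulVec_mulVec, Matrix.nonsing_inv_mul Hhat hHhdet, one_mulVec]
      have hvv_eq2 : v ⬝ᵥ v = a ⬝ᵥ Hhat⁻¹.mulVec (T.mulVec v) := by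
        rw [symm_dot hHhatit, hia, hvv_eq]
      have hcs := cs_psd (hHhat.inv.posSemidef) a (T.mulVec v)
      have haa : a ⬝ᵥ Hhat⁻¹.mulVec a = x ⬝ᵥ Hhat.mulVec x := by
        rw [symm_dot hHhatit, hia, dotProduct_comm, ha_def]
      have hxH : x ⬝ᵥ H.mulVec x = v ⬝ᵥ v := by
        rw [← hTsq, ← mulVec_mulVec, symm_dot hTt, hTx]
      have hL := keyL x
      rw [hxH] at hL
      rw [← hvv_eq2, haa, ← hq1] at hcs
      have hxHx : 0 ≤ x ⬝ᵥ Hhat.mulVec x := by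
        have := hEig x; have := dot_nn x; nlinarith
      have hvv := dot_nn v
      -- hcs : (v⬝v)^2 ≤ (x⬝Ĥx) * q,  hL : (1-c)(x⬝Ĥx) ≤ v⬝v
      rcases eq_or_lt_of_le hvv with h0 | h0
      · rw [← h0]; simpa using hq0
      · nlinarith [mul_le_mul_of_nonneg_right hL hq0]
  -- conclude
  have hval : v ⬝ᵥ (T * (H⁻¹ - Hhat⁻¹) * T).mulVec v = v ⬝ᵥ v - q := by
    rw [hmat, sub_mulVec, one_mulVec, dotProduct_sub, hq_def]
  rw [hval, abs_le]
  constructor <;> linarith
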